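/- In the sedenion algebra 𝕊, with α = e₁ + e₁₀ and β = e₇ + e₁₂, the polynomial f(x) = α x has both β and −β as roots, β and α are quadratically equivalent (same trace 0 and norm 2), but α is not a root of f. Hence a root of a polynomial over 𝕊 need be neither isolated nor spherical. -/

import Mathlib

/-- Cayley–Dickson double (with γ = -1) of an algebra with involution. -/
def CD (A : Type*) : Type _ := A × A

namespace CD

variable {A : Type*}

instance [AddCommGroup A] : AddCommGroup (CD A) := inferInstanceAs (AddCommGroup (A × A))
noncomputable instance [AddCommGroup A] [Module ℝ A] : Module ℝ (CD A) :=
  inferInstanceAs (Module ℝ (A × A))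

/-- Build an element of the double from its two halves. -/
def mk (a b : A) : CD A := (a, b)

section
set_option linter.unusedSectionVars false

/-- A star operation fixing `1`. -/
class StarOne (A : Type*) [One A] [Star A] : Prop where
  star_one : star (1 : A) = 1

variable [NonAssocRing A] [StarAddMonoid A] [StarOne A]

instance : One (CD A) := ⟨((1 : A), 0)⟩
instance : Mul (CD A) :=
  ⟨fun x y => (x.1 * y.1 - star y.2 * x.2, y.2 * x.1 + x.2 * star y.1)⟩
instance : Star (CD A) := ⟨fun x => (star x.1, -x.2)⟩

lemma mul_def (x y : CD A) :
    x * y = (x.1 * y.1 - star y.2 * x.2, y.2 * x.1 + x.2 * star y.1) := rfl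
lemma one_def : (1 : CD A) = ((1 : A), 0) := rfl
lemma star_def (x : CD A) : star x = (star x.1, -x.2) := rfl
lemma add_def (x y : CD A) : x + y = (x.1 + y.1, x.2 + y.2) := rfl
lemma zero_def : (0 : CD A) = ((0 : A), 0) := rfl

instance instNonAssocRing : NonAssocRing (CD A) where
  __ := (inferInstance : AddCommGroup (CD A))
  left_distrib a b c := by
    refine Prod.ext ?_ ?_
    · show a.1 * (b.1 + c.1) - star (b.2 + c.2) * a.2 =
        (a.1 * b.1 - star b.2 * a.2) + (a.1 * c.1 - star c.2 * a.2)
      rw [mul_add, star_add, add_mul]; abel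
    · show (b.2 + c.2) * a.1 + a.2 * star (b.1 + c.1) =
        (b.2 * a.1 + a.2 * star b.1) + (c.2 * a.1 + a.2 * star c.1)
      rw [add_mul, star_add, mul_add]; abel
  right_distrib a b c := by
    refine Prod.ext ?_ ?_
    · show (a.1 + b.1) * c.1 - star c.2 * (a.2 + b.2) =
        (a.1 * c.1 - star c.2 * a.2) + (b.1 * c.1 - star c.2 * b.2)
      rw [add_mul, mul_add]; abel
    · show c.2 * (a.1 + b.1) + (a.2 + b.2) * star c.1 =
        (c.2 * a.1 + a.2 * star c.1) + (c.2 * b.1 + b.2 * star c.1)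
      rw [mul_add, add_mul]; abel
  zero_mul a := by
    refine Prod.ext ?_ ?_
    · show (0 : A) * a.1 - star a.2 * 0 = 0; simp
    · show a.2 * 0 + 0 * star a.1 = 0; simp
  mul_zero a := by
    refine Prod.ext ?_ ?_
    · show a.1 * 0 - star (0 : A) * a.2 = 0; simp
    · show (0 : A) * a.1 + a.2 * star 0 = 0; simp
  one_mul a := by
    refine Prod.ext ?_ ?_
    · show (1 : A) * a.1 - star a.2 * 0 = a.1; simp
    · show a.2 * 1 + 0 * star a.1 = a.2; simp
  mul_one a := by
    refine Prod.ext ?_ ?_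
    · show a.1 * 1 - star (0 : A) * a.2 = a.1; simp
    · show (0 : A) * a.1 + a.2 * star 1 = a.2; simp [StarOne.star_one]

instance instStarAddMonoid : StarAddMonoid (CD A) where
  star_involutive x := Prod.ext (star_star x.1) (neg_neg x.2)
  star_add x y := Prod.ext (star_add x.1 y.1) (neg_add x.2 y.2)

instance instStarOne : StarOne (CD A) :=
  ⟨Prod.ext (StarOne.star_one) (neg_zero)⟩

end

end CD

instance : CD.StarOne ℝ := ⟨by simp⟩

/-- The real octonions, as a three-fold Cayley–Dickson double of ℝ. -/
def Octonion : Type := CD (CD (CD ℝ))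

instance : NonAssocRing Octonion := inferInstanceAs (NonAssocRing (CD (CD (CD ℝ))))
instance : StarAddMonoid Octonion := inferInstanceAs (StarAddMonoid (CD (CD (CD ℝ))))
instance : CD.StarOne Octonion := inferInstanceAs (CD.StarOne (CD (CD (CD ℝ))))
noncomputable instance : Module ℝ Octonion := inferInstanceAs (Module ℝ (CD (CD (CD ℝ))))

/-- The real sedenions, as the Cayley–Dickson double of the octonions. -/
def Sedenion : Type := CD Octonion

instance : NonAssocRing Sedenion := inferInstanceAs (NonAssocRing (CD Octonion))
instance : StarAddMonoid Sedenion := inferInstanceAs (StarAddMonoid (CD Octonion))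
instance : CD.StarOne Sedenion := inferInstanceAs (CD.StarOne (CD Octonion))
noncomputable instance : Module ℝ Sedenion := inferInstanceAs (Module ℝ (CD Octonion))

/-- Assemble a complex number, quaternion, octonion, sedenion from real coordinates. -/
def mkC (f : ℕ → ℝ) (k : ℕ) : CD ℝ := CD.mk (f k) (f (k+1))
def mkH (f : ℕ → ℝ) (k : ℕ) : CD (CD ℝ) := CD.mk (mkC f k) (mkC f (k+2))
def mkO (f : ℕ → ℝ) (k : ℕ) : Octonion := CD.mk (mkH f k) (mkH f (k+4))
def mkS (f : ℕ → ℝ) : Sedenion := CD.mk (mkO f 0) (mkO f 8)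

/-- The standard basis `e₀, …, e₁₅` of the sedenions. -/
def sE (n : ℕ) : Sedenion := mkS (fun k => if k = n then 1 else 0)

/-- The standard basis `e₀, …, e₇` of the octonions. -/
def oE (n : ℕ) : Octonion := mkO (fun k => if k = n then 1 else 0) 0

/-- Powers in a (power-associative) non-associative algebra. -/
def cdpow {A : Type*} [One A] [Mul A] (x : A) : ℕ → A
  | 0 => 1
  | n+1 => cdpow x n * x


section helpers

/-- View a sedenion as a pair of octonions (definitional identity). -/
def sp (x : Sedenion) : Octonion × Octonion := x
def ps (x : Octonion × Octonion) : Sedenion := x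
def so (x : Octonion) : CD (CD ℝ) × CD (CD ℝ) := x
def po (x : CD (CD ℝ) × CD (CD ℝ)) : Octonion := x

@[simp] lemma sp_ps (p : Octonion × Octonion) : sp (ps p) = p := rfl
@[simp] lemma so_po (p : CD (CD ℝ) × CD (CD ℝ)) : so (po p) = p := rfl
@[simp] lemma ps_inj (p q : Octonion × Octonion) : ps p = ps q ↔ p = q := Iff.rfl
@[simp] lemma po_inj (p q : CD (CD ℝ) × CD (CD ℝ)) : po p = po q ↔ p = q := Iff.rfl
@[simp] lemma ps_eq_zero (p : Octonion × Octonion) : ps p = 0 ↔ p = 0 := Iff.rfl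
@[simp] lemma po_eq_zero (p : CD (CD ℝ) × CD (CD ℝ)) : po p = 0 ↔ p = 0 := Iff.rfl
@[simp] lemma sp_mk (a b : Octonion) : sp (CD.mk a b) = (a, b) := rfl
@[simp] lemma sp_pair (a b : Octonion) : sp ((a, b) : Octonion × Octonion) = (a, b) := rfl
@[simp] lemma so_pair (a b : CD (CD ℝ)) : so ((a, b) : CD (CD ℝ) × CD (CD ℝ)) = (a, b) := rfl
@[simp] lemma so_mk (a b : CD (CD ℝ)) : so (CD.mk a b) = (a, b) := rfl

lemma sed_mul (x y : Sedenion) :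
    x * y = ps ((sp x).1 * (sp y).1 - star (sp y).2 * (sp x).2,
                (sp y).2 * (sp x).1 + (sp x).2 * star (sp y).1) := rfl
lemma sed_add (x y : Sedenion) : x + y = ps ((sp x).1 + (sp y).1, (sp x).2 + (sp y).2) := rfl
lemma sed_neg (x : Sedenion) : -x = ps (-(sp x).1, -(sp x).2) := rfl
lemma sed_star (x : Sedenion) : star x = ps (star (sp x).1, -(sp x).2) := rfl

lemma oct_mul (x y : Octonion) :
    x * y = po ((so x).1 * (so y).1 - star (so y).2 * (so x).2,
                (so y).2 * (so x).1 + (so x).2 * star (so y).1) := rfl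
lemma oct_add (x y : Octonion) : x + y = po ((so x).1 + (so y).1, (so x).2 + (so y).2) := rfl
lemma oct_neg (x : Octonion) : -x = po (-(so x).1, -(so x).2) := rfl
lemma oct_star (x : Octonion) : star x = po (star (so x).1, -(so x).2) := rfl
lemma sed_sub (x y : Sedenion) : x - y = ps ((sp x).1 - (sp y).1, (sp x).2 - (sp y).2) := rfl
lemma oct_sub (x y : Octonion) : x - y = po ((so x).1 - (so y).1, (so x).2 - (so y).2) := rfl
lemma cd_neg {A : Type*} [AddCommGroup A] (x : CD A) : -x = (-x.1, -x.2) := rfl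
lemma cd_sub {A : Type*} [AddCommGroup A] (x y : CD A) : x - y = (x.1 - y.1, x.2 - y.2) := rfl
lemma cd_add' {A : Type*} [AddCommGroup A] (x y : CD A) : x + y = (x.1 + y.1, x.2 + y.2) := rfl
lemma cd_ext_iff {A : Type*} (x y : CD A) : x = y ↔ x.1 = y.1 ∧ x.2 = y.2 := Prod.ext_iff
@[simp] lemma cd_zero_fst {A : Type*} [AddCommGroup A] : ((0 : CD A)).1 = 0 := rfl
@[simp] lemma cd_zero_snd {A : Type*} [AddCommGroup A] : ((0 : CD A)).2 = 0 := rfl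
@[simp] lemma oct_zero_so : so (0 : Octonion) = 0 := rfl

lemma sd_mk_add (a b c d : CD (CD (CD ℝ))) : @HAdd.hAdd Sedenion Sedenion Sedenion _ (CD.mk a b) (CD.mk c d) =
    CD.mk (@HAdd.hAdd Octonion Octonion Octonion _ a c) (@HAdd.hAdd Octonion Octonion Octonion _ b d) := rfl
lemma sd_mk_sub (a b c d : CD (CD (CD ℝ))) : @HSub.hSub Sedenion Sedenion Sedenion _ (CD.mk a b) (CD.mk c d) =
    CD.mk (@HSub.hSub Octonion Octonion Octonion _ a c) (@HSub.hSub Octonion Octonion Octonion _ b d) := rfl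
lemma sd_mk_neg (a b : CD (CD (CD ℝ))) : @Neg.neg Sedenion _ (CD.mk a b) =
    CD.mk (@Neg.neg Octonion _ a) (@Neg.neg Octonion _ b) := rfl
lemma sd_mk_mul (a b c d : CD (CD (CD ℝ))) : @HMul.hMul Sedenion Sedenion Sedenion _ (CD.mk a b) (CD.mk c d) =
    CD.mk (@HMul.hMul Octonion Octonion Octonion _ a c - @HMul.hMul Octonion Octonion Octonion _ (@star Octonion _ d) b)
      (@HMul.hMul Octonion Octonion Octonion _ d a + @HMul.hMul Octonion Octonion Octonion _ b (@star Octonion _ c)) := rfl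
lemma sd_mk_star (a b : CD (CD (CD ℝ))) : @star Sedenion _ (CD.mk a b) =
    CD.mk (@star Octonion _ a) (@Neg.neg Octonion _ b) := rfl
lemma sd_zero_mk : (0 : Sedenion) = CD.mk 0 0 := rfl
lemma sd_mk_inj (a b c d : CD (CD (CD ℝ))) :
    @Eq Sedenion (CD.mk a b) (CD.mk c d) ↔ @Eq Octonion a c ∧ @Eq Octonion b d := Prod.ext_iff
lemma oc_mk_add (a b c d : CD (CD ℝ)) : @HAdd.hAdd Octonion Octonion Octonion _ (CD.mk a b) (CD.mk c d) = CD.mk (a + c) (b + d) := rfl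
lemma oc_mk_sub (a b c d : CD (CD ℝ)) : @HSub.hSub Octonion Octonion Octonion _ (CD.mk a b) (CD.mk c d) = CD.mk (a - c) (b - d) := rfl
lemma oc_mk_neg (a b : CD (CD ℝ)) : @Neg.neg Octonion _ (CD.mk a b) = CD.mk (-a) (-b) := rfl
lemma oc_mk_mul (a b c d : CD (CD ℝ)) :
    @HMul.hMul Octonion Octonion Octonion _ (CD.mk a b) (CD.mk c d) = CD.mk (a * c - star d * b) (d * a + b * star c) := rfl
lemma oc_mk_star (a b : CD (CD ℝ)) : @star Octonion _ (CD.mk a b) = CD.mk (star a) (-b) := rfl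
lemma oc_zero_mk : (0 : Octonion) = CD.mk 0 0 := rfl
lemma oc_mk_inj (a b c d : CD (CD ℝ)) : @Eq Octonion (CD.mk a b) (CD.mk c d) ↔ a = c ∧ b = d := Prod.ext_iff
lemma qu_mk_add (a b c d : CD ℝ) : (CD.mk a b : CD (CD ℝ)) + CD.mk c d = CD.mk (a + c) (b + d) := rfl
lemma qu_mk_sub (a b c d : CD ℝ) : (CD.mk a b : CD (CD ℝ)) - CD.mk c d = CD.mk (a - c) (b - d) := rfl
lemma qu_mk_neg (a b : CD ℝ) : -(CD.mk a b : CD (CD ℝ)) = CD.mk (-a) (-b) := rfl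
lemma qu_mk_mul (a b c d : CD ℝ) :
    (CD.mk a b : CD (CD ℝ)) * CD.mk c d = CD.mk (a * c - star d * b) (d * a + b * star c) := rfl
lemma qu_mk_star (a b : CD ℝ) : star (CD.mk a b : CD (CD ℝ)) = CD.mk (star a) (-b) := rfl
lemma qu_zero_mk : (0 : CD (CD ℝ)) = CD.mk 0 0 := rfl
lemma qu_mk_inj (a b c d : CD ℝ) : (CD.mk a b : CD (CD ℝ)) = CD.mk c d ↔ a = c ∧ b = d := Prod.ext_iff
lemma cx_mk_add (a b c d : ℝ) : (CD.mk a b : CD ℝ) + CD.mk c d = CD.mk (a + c) (b + d) := rfl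
lemma cx_mk_sub (a b c d : ℝ) : (CD.mk a b : CD ℝ) - CD.mk c d = CD.mk (a - c) (b - d) := rfl
lemma cx_mk_neg (a b : ℝ) : -(CD.mk a b : CD ℝ) = CD.mk (-a) (-b) := rfl
lemma cx_mk_mul (a b c d : ℝ) :
    (CD.mk a b : CD ℝ) * CD.mk c d = CD.mk (a * c - star d * b) (d * a + b * star c) := rfl
lemma cx_mk_star (a b : ℝ) : star (CD.mk a b : CD ℝ) = CD.mk (star a) (-b) := rfl
lemma cx_zero_mk : (0 : CD ℝ) = CD.mk 0 0 := rfl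
lemma cx_mk_inj (a b c d : ℝ) : (CD.mk a b : CD ℝ) = CD.mk c d ↔ a = c ∧ b = d := Prod.ext_iff

end helpers

set_option maxHeartbeats 2000000 in
/-- In the sedenions, the polynomial `f(x) = α x` (with `α = e₁ + e₁₀`,
`β = e₇ + e₁₂`) has both `β` and `-β` as roots; `α` and `β` are quadratically equivalent
(both have trace `0` and norm `2`), yet `α` is not a root of `f`. So a root need be
neither isolated nor spherical. -/
theorem stmt9 :
    (sE 1 + sE 10) * (sE 7 + sE 12) = 0 ∧
    (sE 1 + sE 10) * (-(sE 7 + sE 12)) = 0 ∧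
    (sE 1 + sE 10) + star (sE 1 + sE 10) = 0 ∧
    (sE 7 + sE 12) + star (sE 7 + sE 12) = 0 ∧
    (sE 1 + sE 10) * star (sE 1 + sE 10) = (sE 7 + sE 12) * star (sE 7 + sE 12) ∧
    (sE 1 + sE 10) * (sE 1 + sE 10) ≠ 0 := by
  refine ⟨?_, ?_, ?_, ?_, ?_, ?_⟩ <;>
  · norm_num [sE, mkS, mkO, mkH, mkC]
    simp only [star_trivial, sd_mk_add, sd_mk_sub, sd_mk_neg, sd_mk_mul, sd_mk_star, sd_zero_mk, sd_mk_inj, oc_mk_add, oc_mk_sub, oc_mk_neg, oc_mk_mul, oc_mk_star, oc_zero_mk, oc_mk_inj,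
      qu_mk_add, qu_mk_sub, qu_mk_neg, qu_mk_mul, qu_mk_star, qu_zero_mk, qu_mk_inj, cx_mk_add, cx_mk_sub, cx_mk_neg, cx_mk_mul, cx_mk_star, cx_zero_mk, cx_mk_inj]
    norm_num
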